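/- If H₁ and H₂ are commensurable finitely generated infinite subgroups of a finitely generated group G (i.e. H₁ ∩ H₂ has finite index in both H₁ and H₂), then dist^{H₁}_G ∼ dist^{H₂}_G. -/

import Mathlib

/-- Domination relation: `f ≼ g` iff there are positive constants `A, B, C` with
`f x ≤ g (A*x) + B*x` for all `x > C`. -/
def Dominates (f g : ℝ → ℝ) : Prop :=
  ∃ A B C : ℝ, 0 < A ∧ 0 < B ∧ 0 < C ∧ ∀ x : ℝ, C < x → f x ≤ g (A * x) + B * x

/-- `f ∼ g` iff `f ≼ g` and `g ≼ f`. -/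
def FEquiv (f g : ℝ → ℝ) : Prop := Dominates f g ∧ Dominates g f

/-- The word length of `g` with respect to the (symmetrized) alphabet `S`. -/
noncomputable def wordLength {G : Type*} [Group G] (S : Set G) (g : G) : ℕ :=
  sInf {n | ∃ w : List G, (∀ x ∈ w, x ∈ S ∨ x⁻¹ ∈ S) ∧ w.prod = g ∧ w.length = n}

/-- The lower distortion of the subset `K` of `G`:
`dist(r) = min { |k|_T : k ∈ K, |k|_S ≥ r }` (with `min ∅ = 0`). -/
noncomputable def lowerDist {G : Type*} [Group G] (S K T : Set G) (r : ℝ) : ℝ :=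
  sInf {y : ℝ | ∃ k ∈ K, r ≤ (wordLength S k : ℝ) ∧ y = (wordLength T k : ℝ)}

/-- The upper distortion of the subset `K` of `G`:
`Dist(r) = max { |k|_T : k ∈ K, |k|_S ≤ r }`. -/
noncomputable def upperDist {G : Type*} [Group G] (S K T : Set G) (r : ℝ) : ℝ :=
  sSup {y : ℝ | ∃ k ∈ K, (wordLength S k : ℝ) ≤ r ∧ y = (wordLength T k : ℝ)}


namespace LDAux
variable {G : Type*} [Group G]

abbrev Letters (S : Set G) (w : List G) : Prop := ∀ x ∈ w, x ∈ S ∨ x⁻¹ ∈ S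

lemma letters_prod_mem {S : Set G} {w : List G} (h : Letters S w) :
    w.prod ∈ Subgroup.closure S := by
  induction w with
  | nil => simpa using (Subgroup.closure S).one_mem
  | cons a l ih =>
    have ha := h a (by simp)
    have hmem : a ∈ Subgroup.closure S := by
      rcases ha with h' | h'
      · exact Subgroup.subset_closure h'
      · have := Subgroup.subset_closure (k := S) h'
        simpa using (Subgroup.closure S).inv_mem this
    simpa [List.prod_cons] using
      mul_mem hmem (ih fun x hx => h x (List.mem_cons_of_mem _ hx))

lemma exists_word {S : Set G} {g : G} (hg : g ∈ Subgroup.closure S) :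
    ∃ w : List G, Letters S w ∧ w.prod = g := by
  induction hg using Subgroup.closure_induction with
  | mem x hx => exact ⟨[x], by intro y hy; simp at hy; subst hy; exact Or.inl hx, by simp⟩
  | one => exact ⟨[], by intro y hy; simp at hy, by simp⟩
  | mul x y hx hy ihx ihy =>
    obtain ⟨w1, hw1, hp1⟩ := ihx
    obtain ⟨w2, hw2, hp2⟩ := ihy
    exact ⟨w1 ++ w2, fun z hz => by
      rcases List.mem_append.mp hz with h | h
      · exact hw1 z h
      · exact hw2 z h, by simp [hp1, hp2]⟩
  | inv x hx ihx =>
    obtain ⟨w, hw, hp⟩ := ihx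
    refine ⟨(w.map (fun x => x⁻¹)).reverse, ?_, by rw [← List.prod_inv_reverse, hp]⟩
    intro y hy
    simp only [List.mem_reverse, List.mem_map] at hy
    obtain ⟨z, hz, rfl⟩ := hy
    rcases hw z hz with h | h
    · exact Or.inr (by simpa using h)
    · exact Or.inl h

lemma wordLength_le {S : Set G} {g : G} (w : List G) (h1 : Letters S w) (h2 : w.prod = g) :
    wordLength S g ≤ w.length :=
  Nat.sInf_le ⟨w, h1, h2, rfl⟩

lemma exists_min_word {S : Set G} {g : G} (hg : g ∈ Subgroup.closure S) :
    ∃ w : List G, Letters S w ∧ w.prod = g ∧ w.length = wordLength S g := by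
  obtain ⟨w, hw, hp⟩ := exists_word hg
  have hne : {n | ∃ w : List G, Letters S w ∧ w.prod = g ∧ w.length = n}.Nonempty :=
    ⟨w.length, w, hw, hp, rfl⟩
  have := Nat.sInf_mem hne
  obtain ⟨w', h1, h2, h3⟩ := this
  exact ⟨w', h1, h2, h3⟩

lemma wordLength_inv (S : Set G) (g : G) : wordLength S g⁻¹ = wordLength S g := by
  have key : ∀ h : G, ∀ n, (∃ w : List G, Letters S w ∧ w.prod = h ∧ w.length = n) →
      (∃ w : List G, Letters S w ∧ w.prod = h⁻¹ ∧ w.length = n) := by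
    rintro h n ⟨w, hw, rfl, rfl⟩
    refine ⟨(w.map (fun x => x⁻¹)).reverse, ?_, (List.prod_inv_reverse w).symm, by simp⟩
    intro y hy
    simp only [List.mem_reverse, List.mem_map] at hy
    obtain ⟨z, hz, rfl⟩ := hy
    rcases hw z hz with h | h
    · exact Or.inr (by simpa using h)
    · exact Or.inl h
  unfold wordLength
  congr 1
  ext n
  constructor
  · intro hn
    have := key g⁻¹ n hn
    simpa using this
  · intro hn
    exact key g n hn

lemma wordLength_mul_le {S : Set G} {a b : G} (ha : a ∈ Subgroup.closure S)
    (hb : b ∈ Subgroup.closure S) :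
    wordLength S (a * b) ≤ wordLength S a + wordLength S b := by
  obtain ⟨wa, h1a, h2a, h3a⟩ := exists_min_word ha
  obtain ⟨wb, h1b, h2b, h3b⟩ := exists_min_word hb
  have := wordLength_le (S := S) (g := a * b) (wa ++ wb)
    (fun x hx => by rcases List.mem_append.mp hx with h | h
                    exacts [h1a x h, h1b x h]) (by simp [h2a, h2b])
  simpa [h3a, h3b] using this

end LDAux

namespace LDAux
variable {G : Type*} [Group G]

lemma prod_mem_closure {S : Set G} {w : List G}
    (hmem : ∀ x ∈ w, x ∈ Subgroup.closure S) : w.prod ∈ Subgroup.closure S := by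
  induction w with
  | nil => simpa using (Subgroup.closure S).one_mem
  | cons a l ih =>
    simpa [List.prod_cons] using mul_mem (hmem a (by simp))
      (ih fun x hx => hmem x (List.mem_cons_of_mem _ hx))

lemma wordLength_prod_le {S : Set G} {w : List G} {M : ℕ}
    (hmem : ∀ x ∈ w, x ∈ Subgroup.closure S) (hbd : ∀ x ∈ w, wordLength S x ≤ M) :
    wordLength S w.prod ≤ M * w.length := by
  induction w with
  | nil =>
    have : wordLength S (1 : G) ≤ 0 :=
      wordLength_le [] (by intro y hy; simp at hy) (by simp)
    simpa using this
  | cons a l ih =>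
    have hmem' : ∀ x ∈ l, x ∈ Subgroup.closure S := fun x hx => hmem x (List.mem_cons_of_mem _ hx)
    have h1 : wordLength S (a * l.prod) ≤ wordLength S a + wordLength S l.prod :=
      wordLength_mul_le (hmem a (by simp)) (prod_mem_closure hmem')
    have h2 := ih hmem' (fun x hx => hbd x (List.mem_cons_of_mem _ hx))
    have h3 := hbd a (by simp)
    simp only [List.prod_cons, List.length_cons]
    calc wordLength S (a * l.prod) ≤ wordLength S a + wordLength S l.prod := h1
      _ ≤ M + M * l.length := Nat.add_le_add h3 h2
      _ = M * (l.length + 1) := by ring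

/-- comparison of word lengths: every `T`-letter has `S`-length ≤ M. -/
lemma wordLength_le_mul {S T : Set G} {g : G} {M : ℕ}
    (hg : g ∈ Subgroup.closure T)
    (hTS : ∀ t ∈ T, t ∈ Subgroup.closure S)
    (hSgen : Subgroup.closure S = (⊤ : Subgroup G))
    (hM : ∀ t ∈ T, wordLength S t ≤ M) :
    wordLength S g ≤ M * wordLength T g := by
  obtain ⟨w, hw, hp, hl⟩ := exists_min_word hg
  have : wordLength S w.prod ≤ M * w.length := by
    apply wordLength_prod_le
    · intro x hx; rw [hSgen]; trivial
    · intro x hx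
      rcases hw x hx with h | h
      · exact hM x h
      · rw [← wordLength_inv]; exact hM _ h
  rw [hp, hl] at this
  exact this

/-- balls are finite when S is finite; hence infinite subsets have unbounded word length -/
lemma exists_wordLength_ge {S : Set G} (hSfin : S.Finite)
    (hSgen : Subgroup.closure S = (⊤ : Subgroup G))
    {K : Set G} (hK : K.Infinite) (s : ℝ) :
    ∃ k ∈ K, s ≤ (wordLength S k : ℝ) := by
  by_contra hcon
  push_neg at hcon
  set N : ℕ := ⌈s⌉₊ with hN
  have hball : K ⊆ (fun l : List G => l.prod) ''
      {l : List G | (∀ x ∈ l, x ∈ S ∪ S⁻¹) ∧ l.length ≤ N} := by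
    intro k hk
    have hmem : k ∈ Subgroup.closure S := by rw [hSgen]; trivial
    obtain ⟨w, hw, hp, hl⟩ := exists_min_word hmem
    refine ⟨w, ⟨?_, ?_⟩, hp⟩
    · intro x hx
      rcases hw x hx with h | h
      · exact Or.inl h
      · exact Or.inr (Set.mem_inv.mpr h)
    · rw [hl]
      have := hcon k hk
      have h2 : (wordLength S k : ℝ) ≤ (N : ℝ) := (le_of_lt this).trans (Nat.le_ceil s)
      exact_mod_cast h2
  have hfin : ({l : List G | (∀ x ∈ l, x ∈ S ∪ S⁻¹) ∧ l.length ≤ N}).Finite := by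
    have hSym : (S ∪ S⁻¹).Finite := hSfin.union hSfin.inv
    classical
    have : {l : List G | (∀ x ∈ l, x ∈ S ∪ S⁻¹) ∧ l.length ≤ N} ⊆
        (fun l : List ↥(S ∪ S⁻¹) => l.map Subtype.val) ''
          {l : List ↥(S ∪ S⁻¹) | l.length ≤ N} := by
      rintro l ⟨h1, h2⟩
      refine ⟨l.attach.map (fun x => ⟨x.1, h1 x.1 x.2⟩), by simpa using h2, by simp⟩
    refine Set.Finite.subset (Set.Finite.image _ ?_) this
    haveI : Finite ↥(S ∪ S⁻¹) := hSym
    exact List.finite_length_le _ N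
  exact hK (Set.Finite.subset (hfin.image _) hball)

end LDAux

namespace LDAux
variable {G : Type*} [Group G]

lemma lowerDist_bddBelow (S K T : Set G) (r : ℝ) :
    BddBelow {y : ℝ | ∃ k ∈ K, r ≤ (wordLength S k : ℝ) ∧ y = (wordLength T k : ℝ)} := by
  refine ⟨0, ?_⟩
  rintro y ⟨k, hk, h1, rfl⟩
  positivity

lemma lowerDist_le {S K T : Set G} {r : ℝ} {k : G} (hk : k ∈ K)
    (hr : r ≤ (wordLength S k : ℝ)) :
    lowerDist S K T r ≤ (wordLength T k : ℝ) :=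
  csInf_le (lowerDist_bddBelow S K T r) ⟨k, hk, hr, rfl⟩

lemma lowerDist_mono {S K T : Set G} {r r' : ℝ} (h : r ≤ r')
    (hne : ∃ k ∈ K, r' ≤ (wordLength S k : ℝ)) :
    lowerDist S K T r ≤ lowerDist S K T r' := by
  apply csInf_le_csInf (lowerDist_bddBelow S K T r)
  · obtain ⟨k, hk, hr⟩ := hne
    exact ⟨_, k, hk, hr, rfl⟩
  · rintro y ⟨k, hk, h1, rfl⟩
    exact ⟨k, hk, h.trans h1, rfl⟩

lemma lowerDist_attained {S K T : Set G} {r : ℝ}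
    (hne : ∃ k ∈ K, r ≤ (wordLength S k : ℝ)) :
    ∃ k ∈ K, r ≤ (wordLength S k : ℝ) ∧ lowerDist S K T r = (wordLength T k : ℝ) := by
  classical
  set N : Set ℕ := {n | ∃ k ∈ K, r ≤ (wordLength S k : ℝ) ∧ wordLength T k = n} with hNdef
  have hNne : N.Nonempty := by
    obtain ⟨k, hk, hr⟩ := hne
    exact ⟨wordLength T k, k, hk, hr, rfl⟩
  obtain ⟨k, hk, hr, hkmin⟩ := Nat.sInf_mem hNne
  refine ⟨k, hk, hr, ?_⟩
  apply le_antisymm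
  · exact lowerDist_le hk hr
  · apply le_csInf
    · obtain ⟨k', hk', hr'⟩ := hne
      exact ⟨_, k', hk', hr', rfl⟩
    · rintro y ⟨k', hk', h1, rfl⟩
      have : sInf N ≤ wordLength T k' := Nat.sInf_le ⟨k', hk', h1, rfl⟩
      exact_mod_cast hkmin.le.trans this

lemma lowerDist_nonneg (S K T : Set G) (r : ℝ) : 0 ≤ lowerDist S K T r := by
  apply Real.sInf_nonneg
  rintro y ⟨k, hk, h1, rfl⟩
  positivity

end LDAux

namespace LDAux
variable {G : Type*} [Group G]

open Classical in
noncomputable def rep (F : Subgroup G) : G ⧸ F → G :=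
  fun q => if q = ((1 : G) : G ⧸ F) then 1 else q.out

lemma rep_spec (F : Subgroup G) (g : G) :
    (rep F ((g : G) : G ⧸ F))⁻¹ * g ∈ F := by
  unfold rep
  split_ifs with h
  · have : (1:G)⁻¹ * g ∈ F := QuotientGroup.eq.mp h.symm
    simpa using this
  · have hout : ((((g : G) : G ⧸ F).out : G) : G ⧸ F) = ((g : G) : G ⧸ F) :=
      QuotientGroup.out_eq' _
    exact QuotientGroup.eq.mp hout

lemma rep_one_of_mem (F : Subgroup G) {g : G} (hg : g ∈ F) :
    rep F ((g : G) : G ⧸ F) = 1 := by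
  unfold rep
  rw [if_pos]
  exact (QuotientGroup.eq.mpr (by simpa using hg)).symm

lemma rep_image_finite (F H : Subgroup G) (hrel : F.relIndex H ≠ 0) :
    ((fun g => rep F ((g : G) : G ⧸ F)) '' (H : Set G)).Finite := by
  haveI : Finite (H ⧸ F.subgroupOf H) := by
    apply Nat.finite_of_card_ne_zero
    rwa [Subgroup.relIndex, Subgroup.index] at hrel
  have hmk : ((fun g => ((g : G) : G ⧸ F)) '' (H : Set G)).Finite := by
    set qmap : H ⧸ F.subgroupOf H → G ⧸ F :=
      Quotient.map' Subtype.val (fun a b hab => by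
        rw [QuotientGroup.leftRel_apply] at hab ⊢
        simpa [Subgroup.mem_subgroupOf] using hab) with hq
    have hsub : ((fun g => ((g : G) : G ⧸ F)) '' (H : Set G)) ⊆ Set.range qmap := by
      rintro _ ⟨h, hh, rfl⟩
      exact ⟨QuotientGroup.mk (⟨h, hh⟩ : H), rfl⟩
    exact (Set.finite_range qmap).subset hsub
  have : ((fun g => rep F ((g : G) : G ⧸ F)) '' (H : Set G)) =
      rep F '' ((fun g => ((g : G) : G ⧸ F)) '' (H : Set G)) := by
    rw [← Set.image_comp]; rfl
  rw [this]
  exact hmk.image _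

end LDAux

namespace LDAux
variable {G : Type*} [Group G]

/-- The finite set of coset representatives -/
noncomputable def reps (F H : Subgroup G) : Set G :=
  (fun g => rep F ((g : G) : G ⧸ F)) '' (H : Set G)

/-- Schreier rewriting: a word in `T` whose letters lie in `H` can be rewritten,
with the same length, into a word in the Schreier generators, representing
`(rep F w.prod)⁻¹ * w.prod ∈ F`. -/
lemma schreier (F H : Subgroup G) {T : Set G} (hT : T ⊆ (H : Set G)) :
    ∀ w : List G, Letters T w →
    ∃ w' : List G, w'.length = w.length ∧
      (∀ x ∈ w', x ∈ F ∧ ∃ σ ∈ reps F H, ∃ σ' ∈ reps F H, ∃ t : G,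
        (t ∈ T ∨ t⁻¹ ∈ T) ∧ x = σ⁻¹ * t * σ') ∧
      w'.prod = (rep F ((w.prod : G) : G ⧸ F))⁻¹ * w.prod := by
  intro w hw
  induction w with
  | nil =>
    refine ⟨[], rfl, by intro x hx; simp at hx, ?_⟩
    simp [rep_one_of_mem F (F.one_mem)]
  | cons t v ih =>
    have hletters : ∀ x ∈ v, x ∈ T ∨ x⁻¹ ∈ T := fun x hx => hw x (List.mem_cons_of_mem _ hx)
    obtain ⟨v', hlen, hlet, hprod⟩ := ih hletters
    have hmemH : ∀ x, (x ∈ T ∨ x⁻¹ ∈ T) → x ∈ H := by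
      rintro x (hx | hx)
      · exact hT hx
      · simpa using H.inv_mem (hT hx)
    have hvp : v.prod ∈ H := H.list_prod_mem (fun x hx => hmemH x (hletters x hx))
    have htH : t ∈ H := hmemH t (hw t (by simp))
    set σ := rep F (((t * v.prod : G)) : G ⧸ F) with hσ
    set σ' := rep F ((v.prod : G) : G ⧸ F) with hσ'
    set d := σ⁻¹ * t * σ' with hd
    refine ⟨d :: v', by simp [hlen], ?_, ?_⟩
    · intro x hx
      rcases List.mem_cons.mp hx with rfl | hx
      · constructor
        · have h1 : σ⁻¹ * (t * v.prod) ∈ F := rep_spec F _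
          have h2 : σ'⁻¹ * v.prod ∈ F := rep_spec F _
          have : d = (σ⁻¹ * (t * v.prod)) * (σ'⁻¹ * v.prod)⁻¹ := by
            rw [hd]; group
          rw [this]
          exact F.mul_mem h1 (F.inv_mem h2)
        · exact ⟨σ, ⟨t * v.prod, H.mul_mem htH hvp, rfl⟩, σ',
            ⟨v.prod, hvp, rfl⟩, t, hw t (by simp), rfl⟩
      · exact hlet x hx
    · simp only [List.prod_cons, hprod, hd, hσ]
      group
end LDAux

namespace LDAux
variable {G : Type*} [Group G]

lemma wordLength_one (S : Set G) : wordLength S (1 : G) = 0 :=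
  Nat.le_zero.mp (wordLength_le [] (by intro y hy; simp at hy) (by simp))

lemma superadd {S T : Set G} {H : Subgroup G} (hT : T ⊆ (H : Set G))
    (hSgen : Subgroup.closure S = (⊤ : Subgroup G)) {lam : ℕ}
    (hlam : ∀ t ∈ T, wordLength S t ≤ lam) {s : ℝ} (hs : 1 ≤ s) :
    ∀ m : ℕ, ∀ w : List G, Letters T w →
      (m : ℝ) * (s + lam) ≤ (wordLength S w.prod : ℝ) →
      (m : ℝ) * lowerDist S (H : Set G) T s ≤ (w.length : ℝ) := by
  intro m
  induction m with
  | zero => intro w _ _; simp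
  | succ m ih =>
    intro w hw hWL
    classical
    set P : ℕ → Prop := fun i => s ≤ (wordLength S ((w.take i).prod) : ℝ) with hP
    have htop : ∀ g : G, g ∈ Subgroup.closure S := fun g => by rw [hSgen]; trivial
    have hlam' : ∀ x ∈ w, wordLength S x ≤ lam := by
      intro x hx
      rcases hw x hx with h | h
      · exact hlam x h
      · rw [← wordLength_inv]; exact hlam _ h
    have hPlen : P w.length := by
      have h1 : (1 : ℝ) * (s + 0) ≤ ((m : ℝ) + 1) * (s + lam) := by
        have : (0:ℝ) ≤ (lam : ℝ) := by positivity
        nlinarith [Nat.cast_nonneg (α := ℝ) m]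
      simp only [hP, List.take_length]
      push_cast at hWL ⊢
      linarith
    have hex : ∃ i, P i := ⟨w.length, hPlen⟩
    obtain ⟨i, hi, hmin, hile⟩ : ∃ i, P i ∧ (∀ j < i, ¬ P j) ∧ i ≤ w.length :=
      ⟨Nat.find hex, Nat.find_spec hex, fun k hk => Nat.find_min hex hk,
        Nat.find_min' hex hPlen⟩
    have hi0 : i ≠ 0 := by
      intro h0
      have hthis := hi
      rw [h0] at hthis
      simp only [hP, List.take_zero, List.prod_nil, wordLength_one] at hthis
      push_cast at hthis
      linarith
    obtain ⟨j, rfl⟩ : ∃ j, i = j + 1 := ⟨i - 1, (Nat.succ_pred_eq_of_ne_zero hi0).symm⟩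
    have hjlt : j < w.length := hile
    -- upper bound on the S-length of the prefix
    have htake : (w.take (j+1)).prod = (w.take j).prod * w[j] := by
      rw [List.take_succ, List.getElem?_eq_getElem hjlt, List.prod_append]
      simp
    have hxw : w[j] ∈ w := List.getElem_mem hjlt
    have hprefix_lt : (wordLength S ((w.take (j+1)).prod) : ℝ) < s + lam := by
      have h1 : wordLength S ((w.take (j+1)).prod) ≤
          wordLength S ((w.take j).prod) + lam := by
        rw [htake]
        exact (wordLength_mul_le (htop _) (htop _)).trans
          (Nat.add_le_add_left (hlam' _ hxw) _)
      have h2 : ¬ P j := hmin j (Nat.lt_succ_self j)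
      simp only [hP, not_le] at h2
      have := (Nat.cast_le (α := ℝ)).mpr h1
      push_cast at this ⊢
      linarith
    -- the suffix is still long
    have hsplit : (w.take (j+1)).prod * (w.drop (j+1)).prod = w.prod :=
      List.prod_take_mul_prod_drop w (j+1)
    have hdropWL : ((m : ℝ)) * (s + lam) ≤ (wordLength S ((w.drop (j+1)).prod) : ℝ) := by
      have h1 : wordLength S w.prod ≤
          wordLength S ((w.take (j+1)).prod) + wordLength S ((w.drop (j+1)).prod) := by
        conv_lhs => rw [← hsplit]
        exact wordLength_mul_le (htop _) (htop _)
      have := (Nat.cast_le (α := ℝ)).mpr h1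
      push_cast at this hWL ⊢
      linarith
    have hdropLet : Letters T (w.drop (j+1)) :=
      fun x hx => hw x (List.mem_of_mem_drop hx)
    have hIH := ih (w.drop (j+1)) hdropLet hdropWL
    -- the prefix contributes at least lowerDist
    have hpH : (w.take (j+1)).prod ∈ H := by
      apply H.list_prod_mem
      intro x hx
      rcases hw x (List.mem_of_mem_take hx) with h | h
      · exact hT h
      · simpa using H.inv_mem (hT h)
    have hLD : lowerDist S (H : Set G) T s ≤ (wordLength T ((w.take (j+1)).prod) : ℝ) :=
      lowerDist_le hpH hi
    have hWT : wordLength T ((w.take (j+1)).prod) ≤ j + 1 := by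
      have := wordLength_le (S := T) (w.take (j+1))
        (fun x hx => hw x (List.mem_of_mem_take hx)) rfl
      rwa [List.length_take, min_eq_left hile] at this
    have hlen : ((w.drop (j+1)).length : ℝ) = (w.length : ℝ) - (j+1 : ℕ) := by
      rw [List.length_drop]
      push_cast [Nat.cast_sub hile]
      ring
    have hWT' : (wordLength T ((w.take (j+1)).prod) : ℝ) ≤ ((j:ℝ) + 1) := by
      exact_mod_cast hWT
    push_cast at hIH ⊢
    rw [hlen] at hIH
    push_cast at hIH
    nlinarith [lowerDist_nonneg S (H : Set G) T s]
end LDAux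

namespace LDAux
variable {G : Type*} [Group G]

set_option maxHeartbeats 1000000 in
lemma dominates_aux (H₁ H₂ : Subgroup G) (S T₁ T₂ : Set G)
    (hSfin : S.Finite) (hSgen : Subgroup.closure S = (⊤ : Subgroup G))
    (hT₁gen : Subgroup.closure T₁ = H₁)
    (hT₂fin : T₂.Finite) (hT₂sub : T₂ ⊆ (H₂ : Set G)) (hT₂gen : Subgroup.closure T₂ = H₂)
    (hH₂inf : (H₂ : Set G).Infinite)
    (F : Subgroup G) (hF1 : F ≤ H₁) (hF2 : F ≤ H₂) (hrel : F.relIndex H₂ ≠ 0) :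
    Dominates (lowerDist S (H₁ : Set G) T₁) (lowerDist S (H₂ : Set G) T₂) := by
  classical
  have htopS : ∀ g : G, g ∈ Subgroup.closure S := fun g => by rw [hSgen]; trivial
  -- finite set of coset representatives and constants
  have hR : (reps F H₂).Finite := rep_image_finite F H₂ hrel
  set c : ℕ := hR.toFinset.sup (fun σ => wordLength S σ) with hc
  set c₂ : ℕ := hR.toFinset.sup (fun σ => wordLength T₂ σ) with hc₂
  -- Schreier generators
  set Dset : Set G := {x : G | x ∈ F ∧ ∃ σ ∈ reps F H₂, ∃ σ' ∈ reps F H₂, ∃ t : G,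
      (t ∈ T₂ ∨ t⁻¹ ∈ T₂) ∧ x = σ⁻¹ * t * σ'} with hDset
  have hD : Dset.Finite := by
    have hsub : Dset ⊆ (fun p : G × G × G => p.1⁻¹ * p.2.1 * p.2.2) ''
        ((reps F H₂) ×ˢ ((T₂ ∪ T₂⁻¹) ×ˢ (reps F H₂))) := by
      rintro x ⟨_, σ, hσ, σ', hσ', t, ht, rfl⟩
      refine ⟨(σ, t, σ'), ⟨hσ, ?_, hσ'⟩, rfl⟩
      rcases ht with h | h
      · exact Or.inl h
      · exact Or.inr (Set.mem_inv.mpr h)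
    exact ((hR.prod ((hT₂fin.union hT₂fin.inv).prod hR)).image _).subset hsub
  set M : ℕ := hD.toFinset.sup (fun d => wordLength T₁ d) + 1 with hM
  set lam : ℕ := hT₂fin.toFinset.sup (fun t => wordLength S t) with hlamdef
  have hlam : ∀ t ∈ T₂, wordLength S t ≤ lam := fun t ht =>
    Finset.le_sup (hT₂fin.mem_toFinset.mpr ht)
  refine ⟨(M : ℝ) * (2 + lam) + 1, (M : ℝ) * c₂ + 1, (c : ℝ) + lam + 2, by positivity,
    by positivity, by positivity, ?_⟩
  intro r hr
  have hr1 : (1 : ℝ) < r := by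
    have : (0:ℝ) ≤ (c:ℝ) := by positivity
    have : (0:ℝ) ≤ (lam:ℝ) := by positivity
    linarith
  have hrc : (c : ℝ) < r := by
    have : (0:ℝ) ≤ (lam:ℝ) := by positivity
    linarith
  -- Step A : minimizer for the right-hand side at 2r
  obtain ⟨k₂, hk₂H, hk₂S, hk₂min⟩ := lowerDist_attained (T := T₂)
    (exists_wordLength_ge hSfin hSgen hH₂inf (2 * r))
  -- Step B : pass to the intersection
  set σ := rep F ((k₂ : G) : G ⧸ F) with hσdef
  set f := σ⁻¹ * k₂ with hfdef
  have hfF : f ∈ F := rep_spec F k₂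
  have hσR : σ ∈ reps F H₂ := ⟨k₂, hk₂H, rfl⟩
  have hσH₂ : σ ∈ H₂ := by
    have : σ = k₂ * f⁻¹ := by rw [hfdef]; group
    rw [this]
    exact H₂.mul_mem hk₂H (H₂.inv_mem (hF2 hfF))
  have hσc : wordLength S σ ≤ c := Finset.le_sup (hR.mem_toFinset.mpr hσR)
  have hfS : r ≤ (wordLength S f : ℝ) := by
    have hsplit : k₂ = σ * f := by rw [hfdef]; group
    have h1 : wordLength S k₂ ≤ wordLength S σ + wordLength S f := by
      conv_lhs => rw [hsplit]
      exact wordLength_mul_le (htopS _) (htopS _)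
    have h1' := (Nat.cast_le (α := ℝ)).mpr h1
    have h2' := (Nat.cast_le (α := ℝ)).mpr hσc
    push_cast at h1' h2'
    linarith
  have hfH₂ : f ∈ H₂ := H₂.mul_mem (H₂.inv_mem hσH₂) hk₂H
  have hfT₂ : (wordLength T₂ f : ℝ) ≤ (c₂ : ℝ) + (wordLength T₂ k₂ : ℝ) := by
    have h1 : wordLength T₂ f ≤ wordLength T₂ σ⁻¹ + wordLength T₂ k₂ := by
      rw [hfdef]
      exact wordLength_mul_le (by rw [hT₂gen]; exact H₂.inv_mem hσH₂)
        (by rw [hT₂gen]; exact hk₂H)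
    have h2 : wordLength T₂ σ ≤ c₂ := Finset.le_sup (hR.mem_toFinset.mpr hσR)
    rw [wordLength_inv] at h1
    have h1' := (Nat.cast_le (α := ℝ)).mpr h1
    have h2' := (Nat.cast_le (α := ℝ)).mpr h2
    push_cast at h1' h2'
    linarith
  -- Step C & D : rewrite a minimal T₂-word for f in the Schreier generators
  obtain ⟨wf, hwf, hwfp, hwfl⟩ := exists_min_word (S := T₂) (by rw [hT₂gen]; exact hfH₂)
  obtain ⟨w', hw'len, hw'let, hw'prod⟩ := schreier F H₂ hT₂sub wf hwf
  rw [hwfp, rep_one_of_mem F hfF] at hw'prod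
  simp only [inv_one, one_mul] at hw'prod
  -- Step E : bound the T₁-length of f
  have hfT₁ : (wordLength T₁ f : ℝ) ≤ (M : ℝ) * ((wordLength T₂ f : ℝ)) := by
    have h1 : wordLength T₁ w'.prod ≤ M * w'.length := by
      apply wordLength_prod_le
      · intro x hx
        rw [hT₁gen]
        exact hF1 (hw'let x hx).1
      · intro x hx
        have hxD : x ∈ Dset := ⟨(hw'let x hx).1, (hw'let x hx).2⟩
        calc wordLength T₁ x ≤ hD.toFinset.sup (fun d => wordLength T₁ d) :=
              Finset.le_sup (hD.mem_toFinset.mpr hxD)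
          _ ≤ M := by rw [hM]; omega
    rw [hw'prod, hw'len, hwfl] at h1
    exact_mod_cast h1
  -- Step F : f is a competitor for the left-hand side at r
  have hLD1 : lowerDist S (H₁ : Set G) T₁ r ≤ (wordLength T₁ f : ℝ) :=
    lowerDist_le (hF1 hfF) hfS
  -- Step G : superadditivity
  obtain ⟨k₃, hk₃H, hk₃S, hk₃min⟩ := lowerDist_attained (T := T₂)
    (exists_wordLength_ge hSfin hSgen hH₂inf ((M : ℝ) * (2 * r + lam)))
  obtain ⟨w₃, hw₃, hw₃p, hw₃l⟩ := exists_min_word (S := T₂) (by rw [hT₂gen]; exact hk₃H)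
  have hsup : (M : ℝ) * lowerDist S (H₂ : Set G) T₂ (2 * r) ≤ (w₃.length : ℝ) := by
    apply superadd hT₂sub hSgen hlam (by linarith) M w₃ hw₃
    rw [hw₃p]
    exact hk₃S
  rw [hw₃l] at hsup
  -- Step H : monotonicity
  have hmono : lowerDist S (H₂ : Set G) T₂ ((M : ℝ) * (2 * r + lam)) ≤
      lowerDist S (H₂ : Set G) T₂ (((M : ℝ) * (2 + lam) + 1) * r) := by
    apply lowerDist_mono
    · have hM1 : (1 : ℝ) ≤ (M : ℝ) := by exact_mod_cast Nat.one_le_iff_ne_zero.mpr (by omega)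
      have h0lam : (0:ℝ) ≤ (lam : ℝ) := by positivity
      nlinarith [mul_nonneg (mul_nonneg (le_trans zero_le_one hM1) h0lam)
        (sub_nonneg.mpr hr1.le), hr1.le]
    · exact exists_wordLength_ge hSfin hSgen hH₂inf _
  -- put everything together
  have hchain : (M : ℝ) * (wordLength T₂ k₂ : ℝ) ≤
      lowerDist S (H₂ : Set G) T₂ (((M : ℝ) * (2 + lam) + 1) * r) := by
    rw [← hk₂min]
    calc (M : ℝ) * lowerDist S (H₂ : Set G) T₂ (2 * r)
        ≤ (wordLength T₂ k₃ : ℝ) := hsup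
      _ = lowerDist S (H₂ : Set G) T₂ ((M : ℝ) * (2 * r + lam)) := hk₃min.symm
      _ ≤ _ := hmono
  have hMc₂ : (M : ℝ) * (c₂ : ℝ) ≤ ((M : ℝ) * c₂ + 1) * r := by
    have h1 : (0:ℝ) ≤ (M:ℝ) * c₂ := by positivity
    nlinarith
  have hM0 : (0:ℝ) ≤ (M : ℝ) := by positivity
  calc lowerDist S (H₁ : Set G) T₁ r ≤ (wordLength T₁ f : ℝ) := hLD1
    _ ≤ (M : ℝ) * (wordLength T₂ f : ℝ) := hfT₁
    _ ≤ (M : ℝ) * ((c₂ : ℝ) + (wordLength T₂ k₂ : ℝ)) := by nlinarith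
    _ = (M : ℝ) * (wordLength T₂ k₂ : ℝ) + (M : ℝ) * c₂ := by ring
    _ ≤ lowerDist S (H₂ : Set G) T₂ (((M : ℝ) * (2 + lam) + 1) * r)
        + ((M : ℝ) * c₂ + 1) * r := add_le_add hchain hMc₂
end LDAux

/-- If `H₁` and `H₂` are commensurable infinite finitely generated subgroups of a
finitely generated group `G`, then `dist^{H₁}_G ∼ dist^{H₂}_G`. -/
theorem lowerDist_equiv_of_commensurable {G : Type*} [Group G]
    (H₁ H₂ : Subgroup G) (S T₁ T₂ : Set G)
    (hSfin : S.Finite) (hSgen : Subgroup.closure S = ⊤)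
    (hT₁fin : T₁.Finite) (hT₁sub : T₁ ⊆ (H₁ : Set G)) (hT₁gen : Subgroup.closure T₁ = H₁)
    (hT₂fin : T₂.Finite) (hT₂sub : T₂ ⊆ (H₂ : Set G)) (hT₂gen : Subgroup.closure T₂ = H₂)
    (hH₁inf : (H₁ : Set G).Infinite) (hH₂inf : (H₂ : Set G).Infinite)
    (hcomm₁ : (H₁ ⊓ H₂).relIndex H₁ ≠ 0) (hcomm₂ : (H₁ ⊓ H₂).relIndex H₂ ≠ 0) :
    FEquiv (lowerDist S (H₁ : Set G) T₁) (lowerDist S (H₂ : Set G) T₂) := by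
  constructor
  · exact LDAux.dominates_aux H₁ H₂ S T₁ T₂ hSfin hSgen hT₁gen hT₂fin hT₂sub hT₂gen
      hH₂inf (H₁ ⊓ H₂) inf_le_left inf_le_right hcomm₂
  · exact LDAux.dominates_aux H₂ H₁ S T₂ T₁ hSfin hSgen hT₂gen hT₁fin hT₁sub hT₁gen
      hH₁inf (H₁ ⊓ H₂) inf_le_right inf_le_left hcomm₁
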